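/- (Combinatorial acyclicity lemma.) Let S be a finite set with a total order, |S| = s, and let {B_{T''}}_{T'' ⊆ S} be a family of abelian groups. For T ⊆ S define A_T = ⊕_{T'' ⊆ T} B_{T''}, and for a fixed T ⊆ S define the cochain complex C•_{S,T} with C^n = ⊕_{|T'| = s−n, T' ⊇ S∖T} A_{T'} and differential sending x ∈ A_{T'} to Σ_{i ∈ T'∩T} (−1)^{|{j ∈ T'∩T : j < i}|} x|_{T'∖{i}}, where x|_{T'∖{i}} denotes the natural projection A_{T'} → A_{T'∖{i}}. Then H^n(C•_{S,T}) = 0 for n ≠ 0 and H^0(C•_{S,T}) ≅ ⊕_{T' ⊇ T} B_{T'}. -/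

import Mathlib

set_option linter.unusedSectionVars false


noncomputable section

variable {ι : Type} [Fintype ι] [LinearOrder ι]
variable (B : Finset ι → Type) [∀ T'', AddCommGroup (B T'')]

/-- `A_T = ⊕_{T'' ⊆ T} B_{T''}`. -/
abbrev AT (T' : Finset ι) : Type := ∀ T'' : {T'' : Finset ι // T'' ⊆ T'}, B T''.val

/-- The natural projection `A_{T₂} → A_{T₁}` for `T₁ ⊆ T₂` (killing the summands
`B_{T''}` with `T'' ⊄ T₁`). -/
def projAT {T₁ T₂ : Finset ι} (h : T₁ ⊆ T₂) (x : AT B T₂) : AT B T₁ :=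
  fun T'' => x ⟨T''.val, T''.prop.trans h⟩

/-- The `n`-th term `C^n = ⊕_{|T'| = s - n, T' ⊇ S ∖ T} A_{T'}` of the complex
`C•_{S,T}`. -/
abbrev Cn (T : Finset ι) (n : ℕ) : Type :=
  ∀ T' : {T' : Finset ι // Finset.univ \ T ⊆ T' ∧ T'.card + n = Fintype.card ι},
    AT B T'.val

/-- The differential of `C•_{S,T}`: the component of `d x` at `T₁` is
`∑_{i ∈ T ∖ T₁} (-1)^{|{j ∈ (insert i T₁) ∩ T : j < i}|} (x_{insert i T₁})|_{T₁}`. -/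
def ddC (T : Finset ι) (n : ℕ) : Cn B T n →+ Cn B T (n + 1) :=
  AddMonoidHom.mk'
    (fun x T₁ =>
      ∑ i ∈ (T \ T₁.val).attach,
        haveI hins : Finset.univ \ T ⊆ insert (i : ι) T₁.val ∧
            (insert (i : ι) T₁.val).card + n = Fintype.card ι := by
          constructor
          · exact T₁.prop.1.trans (Finset.subset_insert _ _)
          · rw [Finset.card_insert_of_notMem (Finset.mem_sdiff.mp i.prop).2]
            have := T₁.prop.2
            omega
        ((-1 : ℤ) ^ ((T₁.val ∩ T).filter (· < (i : ι))).card) •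
          projAT B (Finset.subset_insert (i : ι) T₁.val) (x ⟨insert (i : ι) T₁.val, hins⟩))
    (by
      intro x y
      funext T₁ T''
      simp [projAT, Finset.sum_apply, smul_add, Finset.sum_add_distrib])

/-! Auxiliary sign machinery -/

def eCA (T U : Finset ι) (i : ι) : ℤ := (-1) ^ ((U ∩ T).filter (· < i)).card

lemma eCA_mul_self (T U : Finset ι) (i : ι) : eCA T U i * eCA T U i = 1 := by
  rw [eCA, ← pow_add]
  exact Even.neg_one_pow ⟨_, rfl⟩

lemma eCA_smul_smul {M : Type} [AddCommGroup M] (T U : Finset ι) (i : ι) (v : M) :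
    eCA T U i • eCA T U i • v = v := by
  rw [smul_smul, eCA_mul_self, one_smul]

lemma eCA_insert_of_lt {i j : ι} (T : Finset ι) (hij : i < j) (U : Finset ι) :
    eCA T (insert j U) i = eCA T U i := by
  unfold eCA
  by_cases hj : j ∈ T
  · rw [Finset.insert_inter_of_mem hj, Finset.filter_insert, if_neg (not_lt.mpr hij.le)]
  · rw [Finset.insert_inter_of_notMem hj]

lemma eCA_insert_of_gt {i j : ι} (T : Finset ι) (hij : i < j) (hi : i ∈ T) (hiU : i ∉ U) :
    eCA T (insert i U) j = - eCA T U j := by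
  unfold eCA
  rw [Finset.insert_inter_of_mem hi, Finset.filter_insert, if_pos hij,
    Finset.card_insert_of_notMem (by simp [hiU]), pow_succ]
  ring

lemma eCA_swap {U : Finset ι} {i j : ι} (T : Finset ι) (hi : i ∈ T) (hj : j ∈ T)
    (hiU : i ∉ U) (hjU : j ∉ U) (hij : i ≠ j) :
    eCA T U i * eCA T (insert i U) j = -(eCA T U j * eCA T (insert j U) i) := by
  rcases hij.lt_or_gt with h | h
  · rw [eCA_insert_of_gt T h hi hiU, eCA_insert_of_lt T h]; ring
  · rw [eCA_insert_of_lt T h, eCA_insert_of_gt T h hj hjU]; ring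

lemma eCA_swap' {U : Finset ι} {i m : ι} (T : Finset ι) (hi : i ∈ T) (hm : m ∈ T)
    (hiU : i ∉ U) (hmU : m ∉ U) (him : i ≠ m) :
    eCA T (insert m U) i * eCA T (insert i U) m = -(eCA T U m * eCA T U i) := by
  rcases him.lt_or_gt with h | h
  · rw [eCA_insert_of_lt T h, eCA_insert_of_gt T h hi hiU]; ring
  · rw [eCA_insert_of_gt T h hm hmU, eCA_insert_of_lt T h]; ring

lemma ins_prop {T T₁ : Finset ι} {n : ℕ}
    (hp : Finset.univ \ T ⊆ T₁ ∧ T₁.card + (n + 1) = Fintype.card ι)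
    {i : ι} (hi : i ∈ T \ T₁) :
    Finset.univ \ T ⊆ insert i T₁ ∧ (insert i T₁).card + n = Fintype.card ι := by
  constructor
  · exact hp.1.trans (Finset.subset_insert _ _)
  · rw [Finset.card_insert_of_notMem (Finset.mem_sdiff.mp hi).2]
    omega

def dTerm (T : Finset ι) (n : ℕ) (x : Cn B T n) (T₁ T'' : Finset ι) (h2 : T'' ⊆ T₁) (i : ι) :
    B T'' :=
  if h : Finset.univ \ T ⊆ insert i T₁ ∧ (insert i T₁).card + n = Fintype.card ι then
    eCA T T₁ i • x ⟨insert i T₁, h⟩ ⟨T'', h2.trans (Finset.subset_insert i T₁)⟩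
  else 0

lemma Cn_eval_congr {T : Finset ι} {n : ℕ} (x : Cn B T n) {A A' : Finset ι} (e : A = A')
    (h : Finset.univ \ T ⊆ A ∧ A.card + n = Fintype.card ι)
    (h' : Finset.univ \ T ⊆ A' ∧ A'.card + n = Fintype.card ι)
    {T'' : Finset ι} (h₂ : T'' ⊆ A) (h₂' : T'' ⊆ A') :
    x ⟨A, h⟩ ⟨T'', h₂⟩ = x ⟨A', h'⟩ ⟨T'', h₂'⟩ := by subst e; rfl

lemma ddC_eval {T : Finset ι} (n : ℕ) (x : Cn B T n) {T₁ : Finset ι}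
    (hp : Finset.univ \ T ⊆ T₁ ∧ T₁.card + (n + 1) = Fintype.card ι)
    {T'' : Finset ι} (h2 : T'' ⊆ T₁) :
    ddC B T n x ⟨T₁, hp⟩ ⟨T'', h2⟩ = ∑ i ∈ T \ T₁, dTerm B T n x T₁ T'' h2 i := by
  rw [← Finset.sum_attach (T \ T₁) (dTerm B T n x T₁ T'' h2)]
  show (∑ i ∈ (T \ T₁).attach,
      ((-1 : ℤ) ^ ((T₁ ∩ T).filter (· < (i : ι))).card) •
        projAT B (Finset.subset_insert (i : ι) T₁)
          (x ⟨insert (i : ι) T₁, ins_prop hp i.prop⟩)) ⟨T'', h2⟩ = _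
  rw [Finset.sum_apply]
  refine Finset.sum_congr rfl fun i _ => ?_
  rw [dTerm, dif_pos (ins_prop hp i.prop)]
  rfl

lemma sdiff_insert_eq_erase (T T₂ : Finset ι) (i : ι) :
    T \ insert i T₂ = (T \ T₂).erase i := by
  ext a
  simp only [Finset.mem_sdiff, Finset.mem_insert, Finset.mem_erase, not_or]
  tauto

theorem ddC_comp_ddC (T : Finset ι) (n : ℕ) :
    (ddC B T (n + 1)).comp (ddC B T n) = 0 := by
  apply AddMonoidHom.ext
  intro x
  funext T₂' T₂''
  obtain ⟨T₂, hp⟩ := T₂'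
  obtain ⟨T'', h2⟩ := T₂''
  show ddC B T (n + 1) (ddC B T n x) ⟨T₂, hp⟩ ⟨T'', h2⟩ = 0
  rw [ddC_eval]
  have step : ∀ i ∈ T \ T₂,
      dTerm B T (n + 1) (ddC B T n x) T₂ T'' h2 i =
        ∑ j ∈ (T \ T₂).erase i,
          eCA T T₂ i • dTerm B T n x (insert i T₂) T'' (h2.trans (Finset.subset_insert i T₂)) j := by
    intro i hi
    rw [dTerm, dif_pos (ins_prop hp hi), ddC_eval, ← sdiff_insert_eq_erase, Finset.smul_sum]
  rw [Finset.sum_congr rfl step, Finset.sum_sigma']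
  refine Finset.sum_involution (fun p _ => ⟨p.2, p.1⟩) ?_ ?_ ?_ ?_
  · rintro ⟨i, j⟩ hp'
    simp only [Finset.mem_sigma, Finset.mem_erase] at hp'
    obtain ⟨hi, hji, hj⟩ := hp'
    have hiT := (Finset.mem_sdiff.mp hi).1
    have hiT₂ := (Finset.mem_sdiff.mp hi).2
    have hjT := (Finset.mem_sdiff.mp hj).1
    have hjT₂ := (Finset.mem_sdiff.mp hj).2
    have hij : i ≠ j := fun h => hji h.symm
    have hj' : j ∈ T \ insert i T₂ := by
      rw [sdiff_insert_eq_erase]; exact Finset.mem_erase.mpr ⟨hji, hj⟩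
    have hi' : i ∈ T \ insert j T₂ := by
      rw [sdiff_insert_eq_erase]; exact Finset.mem_erase.mpr ⟨hij, hi⟩
    show eCA T T₂ i • dTerm B T n x (insert i T₂) T'' _ j +
        eCA T T₂ j • dTerm B T n x (insert j T₂) T'' _ i = 0
    rw [dTerm, dif_pos (ins_prop (ins_prop hp hi) hj'),
      dTerm, dif_pos (ins_prop (ins_prop hp hj) hi'), smul_smul, smul_smul]
    rw [Cn_eval_congr (B := B) x (Finset.insert_comm j i T₂)
      (ins_prop (ins_prop hp hi) hj') (ins_prop (ins_prop hp hj) hi')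
      (h₂' := (h2.trans (Finset.subset_insert j T₂)).trans (Finset.subset_insert i _))]
    rw [← add_smul, eCA_swap T hiT hjT hiT₂ hjT₂ hij, neg_add_cancel, zero_smul]
  · rintro ⟨i, j⟩ hp' _
    simp only [Finset.mem_sigma, Finset.mem_erase] at hp'
    intro h
    injection h with h1 h2
    exact hp'.2.1 h1
  · rintro ⟨i, j⟩ hp'
    simp only [Finset.mem_sigma, Finset.mem_erase] at hp' ⊢
    exact ⟨hp'.2.2, fun h => hp'.2.1 h.symm, hp'.1⟩
  · rintro ⟨i, j⟩ _; rfl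

lemma erase_prop {T T₁ : Finset ι} {n : ℕ}
    (hq : Finset.univ \ T ⊆ T₁ ∧ T₁.card + n = Fintype.card ι)
    {m : ι} (hmT : m ∈ T) (hm : m ∈ T₁) :
    Finset.univ \ T ⊆ T₁.erase m ∧ (T₁.erase m).card + (n + 1) = Fintype.card ι := by
  constructor
  · rw [Finset.subset_erase]; exact ⟨hq.1, by simp [hmT]⟩
  · rw [Finset.card_erase_of_mem hm]
    have := Finset.card_pos.mpr ⟨m, hm⟩
    omega

def homY (T : Finset ι) (n : ℕ) (x : Cn B T (n + 1)) : Cn B T n :=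
  fun T₁ T'' =>
    if h : (T \ T''.val).Nonempty then
      if hm : (T \ T''.val).min' h ∈ T₁.val then
        eCA T (T₁.val.erase ((T \ T''.val).min' h)) ((T \ T''.val).min' h) •
          x ⟨T₁.val.erase ((T \ T''.val).min' h),
              erase_prop T₁.prop (Finset.mem_sdiff.mp ((T \ T''.val).min'_mem h)).1 hm⟩
            ⟨T''.val, Finset.subset_erase.mpr
              ⟨T''.prop, (Finset.mem_sdiff.mp ((T \ T''.val).min'_mem h)).2⟩⟩
      else 0
    else 0


set_option maxRecDepth 10000 in
lemma homY_eval_mem (T : Finset ι) (n : ℕ) (x : Cn B T (n + 1)) {T₁ : Finset ι}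
    (hq : Finset.univ \ T ⊆ T₁ ∧ T₁.card + n = Fintype.card ι) {T'' : Finset ι}
    (h2 : T'' ⊆ T₁) (hne : (T \ T'').Nonempty) (hm : (T \ T'').min' hne ∈ T₁) :
    homY B T n x ⟨T₁, hq⟩ ⟨T'', h2⟩ =
      eCA T (T₁.erase ((T \ T'').min' hne)) ((T \ T'').min' hne) •
        x ⟨T₁.erase ((T \ T'').min' hne),
            erase_prop hq (Finset.mem_sdiff.mp ((T \ T'').min'_mem hne)).1 hm⟩
          ⟨T'', Finset.subset_erase.mpr
            ⟨h2, (Finset.mem_sdiff.mp ((T \ T'').min'_mem hne)).2⟩⟩ := by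
  unfold homY
  rw [dif_pos hne, dif_pos hm]

set_option maxRecDepth 10000 in
lemma homY_eval_notmem (T : Finset ι) (n : ℕ) (x : Cn B T (n + 1)) {T₁ : Finset ι}
    (hq : Finset.univ \ T ⊆ T₁ ∧ T₁.card + n = Fintype.card ι) {T'' : Finset ι}
    (h2 : T'' ⊆ T₁) (hne : (T \ T'').Nonempty) (hm : (T \ T'').min' hne ∉ T₁) :
    homY B T n x ⟨T₁, hq⟩ ⟨T'', h2⟩ = 0 := by
  unfold homY
  rw [dif_pos hne, dif_neg hm]

theorem ddC_exact (T : Finset ι) (n : ℕ) (x : Cn B T (n + 1))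
    (hx : ddC B T (n + 1) x = 0) : ddC B T n (homY B T n x) = x := by
  funext T₁' T₂''
  obtain ⟨T₁, hp⟩ := T₁'
  obtain ⟨T'', h2⟩ := T₂''
  rw [ddC_eval]
  have hne : (T \ T'').Nonempty := by
    rcases (T \ T'').eq_empty_or_nonempty with he | h
    · exfalso
      have hTsub : T ⊆ T'' := Finset.sdiff_eq_empty_iff_subset.mp he
      have huniv : (Finset.univ : Finset ι) ⊆ T₁ := by
        intro a _
        by_cases haT : a ∈ T
        · exact h2 (hTsub haT)
        · exact hp.1 (Finset.mem_sdiff.mpr ⟨Finset.mem_univ a, haT⟩)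
      have : T₁.card = Fintype.card ι := by
        rw [Finset.univ_subset_iff.mp huniv, Finset.card_univ]
      omega
    · exact h
  have hm_mem : (T \ T'').min' hne ∈ T \ T'' := (T \ T'').min'_mem hne
  have hmT : (T \ T'').min' hne ∈ T := (Finset.mem_sdiff.mp hm_mem).1
  have hmT'' : (T \ T'').min' hne ∉ T'' := (Finset.mem_sdiff.mp hm_mem).2
  by_cases hm : (T \ T'').min' hne ∈ T₁
  · -- case min ∈ T₁ : use that dx = 0 at T₁.erase min
    have hmU : (T \ T'').min' hne ∉ T₁.erase ((T \ T'').min' hne) :=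
      Finset.notMem_erase _ T₁
    have hT : insert ((T \ T'').min' hne) (T₁.erase ((T \ T'').min' hne)) = T₁ :=
      Finset.insert_erase hm
    have hU : Finset.univ \ T ⊆ T₁.erase ((T \ T'').min' hne) ∧
        (T₁.erase ((T \ T'').min' hne)).card + (n + 1 + 1) = Fintype.card ι :=
      erase_prop hp hmT hm
    have hsub : T'' ⊆ T₁.erase ((T \ T'').min' hne) :=
      Finset.subset_erase.mpr ⟨h2, hmT''⟩
    have key : ddC B T (n + 1) x ⟨T₁.erase ((T \ T'').min' hne), hU⟩ ⟨T'', hsub⟩ = 0 := by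
      rw [hx]; rfl
    rw [ddC_eval] at key
    have hsd : T \ (T₁.erase ((T \ T'').min' hne)) = insert ((T \ T'').min' hne) (T \ T₁) := by
      ext a
      simp only [Finset.mem_sdiff, Finset.mem_erase, Finset.mem_insert, not_and]
      constructor
      · rintro ⟨haT, himp⟩
        by_cases ham : a = (T \ T'').min' hne
        · exact Or.inl ham
        · exact Or.inr ⟨haT, himp ham⟩
      · rintro (rfl | ⟨h1, h2'⟩)
        · exact ⟨hmT, fun hne' => absurd rfl hne'⟩
        · exact ⟨h1, fun _ => h2'⟩
    have hmnot : (T \ T'').min' hne ∉ T \ T₁ := fun hc => (Finset.mem_sdiff.mp hc).2 hm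
    rw [hsd, Finset.sum_insert hmnot] at key
    have hmm : (T \ T'').min' hne ∈ T \ (T₁.erase ((T \ T'').min' hne)) :=
      Finset.mem_sdiff.mpr ⟨hmT, hmU⟩
    rw [dTerm, dif_pos (ins_prop hU hmm)] at key
    rw [Cn_eval_congr (B := B) x hT (ins_prop hU hmm) hp
      (hsub.trans (Finset.subset_insert _ _)) h2] at key
    have key2 : ∑ i ∈ T \ T₁, dTerm B T (n + 1) x (T₁.erase ((T \ T'').min' hne)) T'' hsub i =
        -(eCA T (T₁.erase ((T \ T'').min' hne)) ((T \ T'').min' hne) •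
          x ⟨T₁, hp⟩ ⟨T'', h2⟩) := by
      rw [eq_neg_iff_add_eq_zero, add_comm]
      exact key
    have step : ∀ i ∈ T \ T₁,
        dTerm B T n (homY B T n x) T₁ T'' h2 i =
          (-(eCA T (T₁.erase ((T \ T'').min' hne)) ((T \ T'').min' hne))) •
            dTerm B T (n + 1) x (T₁.erase ((T \ T'').min' hne)) T'' hsub i := by
      intro i hi
      have hiT : i ∈ T := (Finset.mem_sdiff.mp hi).1
      have hiT₁ : i ∉ T₁ := (Finset.mem_sdiff.mp hi).2
      have him : i ≠ (T \ T'').min' hne := fun h => hiT₁ (h ▸ hm)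
      have hiU : i ∉ T₁.erase ((T \ T'').min' hne) := fun hc =>
        hiT₁ (Finset.mem_of_mem_erase hc)
      have hi' : i ∈ T \ (T₁.erase ((T \ T'').min' hne)) := Finset.mem_sdiff.mpr ⟨hiT, hiU⟩
      have hE : (insert i T₁).erase ((T \ T'').min' hne) =
          insert i (T₁.erase ((T \ T'').min' hne)) := Finset.erase_insert_of_ne him
      rw [dTerm, dif_pos (ins_prop hp hi), dTerm, dif_pos (ins_prop hU hi')]
      rw [homY_eval_mem B T n x (ins_prop hp hi)
        (h2.trans (Finset.subset_insert i T₁)) hne (Finset.mem_insert_of_mem hm)]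
      rw [Cn_eval_congr (B := B) x hE _ (ins_prop hU hi') _
        (hsub.trans (Finset.subset_insert _ _))]
      have heq : eCA T ((insert i T₁).erase ((T \ T'').min' hne)) ((T \ T'').min' hne) =
          eCA T (insert i (T₁.erase ((T \ T'').min' hne))) ((T \ T'').min' hne) := by
        rw [hE]
      rw [heq, smul_smul, smul_smul]
      congr 1
      have hrw : eCA T T₁ i =
          eCA T (insert ((T \ T'').min' hne) (T₁.erase ((T \ T'').min' hne))) i := by
        rw [hT]
      rw [hrw, eCA_swap' T hiT hmT hiU hmU him]
      ring
    rw [Finset.sum_congr rfl step, ← Finset.smul_sum, key2, smul_neg, neg_smul, neg_neg,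
      eCA_smul_smul]
  · -- case min ∉ T₁ : the only surviving term is i = min
    have hmm : (T \ T'').min' hne ∈ T \ T₁ := Finset.mem_sdiff.mpr ⟨hmT, hm⟩
    rw [Finset.sum_eq_single_of_mem _ hmm ?other]
    case other =>
      intro i hi hine
      rw [dTerm, dif_pos (ins_prop hp hi)]
      rw [homY_eval_notmem B T n x (ins_prop hp hi)
        (h2.trans (Finset.subset_insert i T₁)) hne, smul_zero]
      intro hc
      rcases Finset.mem_insert.mp hc with h | h
      · exact hine h.symm
      · exact hm h
    · rw [dTerm, dif_pos (ins_prop hp hmm)]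
      rw [homY_eval_mem B T n x (ins_prop hp hmm)
        (h2.trans (Finset.subset_insert _ T₁)) hne (Finset.mem_insert_self _ T₁)]
      have hE : (insert ((T \ T'').min' hne) T₁).erase ((T \ T'').min' hne) = T₁ :=
        Finset.erase_insert hm
      rw [Cn_eval_congr (B := B) x hE _ hp _ h2]
      have heq : eCA T ((insert ((T \ T'').min' hne) T₁).erase ((T \ T'').min' hne))
          ((T \ T'').min' hne) = eCA T T₁ ((T \ T'').min' hne) := by rw [hE]
      rw [heq, eCA_smul_smul]

lemma univ_prop (T : Finset ι) :
    Finset.univ \ T ⊆ (Finset.univ : Finset ι) ∧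
      (Finset.univ : Finset ι).card + 0 = Fintype.card ι :=
  ⟨Finset.subset_univ _, by simp⟩

def invF (T : Finset ι) (f : ∀ T' : {T' : Finset ι // T ⊆ T'}, B T'.val) : Cn B T 0 :=
  fun _ T'' => if h : T ⊆ T''.val then f ⟨T''.val, h⟩ else 0

lemma invF_eval (T : Finset ι) (f : ∀ T' : {T' : Finset ι // T ⊆ T'}, B T'.val)
    {T₁ : Finset ι} (hq : Finset.univ \ T ⊆ T₁ ∧ T₁.card + 0 = Fintype.card ι)
    {T'' : Finset ι} (h2 : T'' ⊆ T₁) :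
    invF B T f ⟨T₁, hq⟩ ⟨T'', h2⟩ = if h : T ⊆ T'' then f ⟨T'', h⟩ else 0 := rfl

lemma not_T_subset {T T₁ T'' : Finset ι} {n : ℕ}
    (hp : Finset.univ \ T ⊆ T₁ ∧ T₁.card + (n + 1) = Fintype.card ι)
    (h2 : T'' ⊆ T₁) : ¬ T ⊆ T'' := by
  intro hTsub
  have huniv : (Finset.univ : Finset ι) ⊆ T₁ := by
    intro a _
    by_cases haT : a ∈ T
    · exact h2 (hTsub haT)
    · exact hp.1 (Finset.mem_sdiff.mpr ⟨Finset.mem_univ a, haT⟩)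
  have : T₁.card = Fintype.card ι := by
    rw [Finset.univ_subset_iff.mp huniv, Finset.card_univ]
  omega

lemma invF_mem_ker (T : Finset ι) (f : ∀ T' : {T' : Finset ι // T ⊆ T'}, B T'.val) :
    ddC B T 0 (invF B T f) = 0 := by
  funext T₁' T₂''
  obtain ⟨T₁, hp⟩ := T₁'
  obtain ⟨T'', h2⟩ := T₂''
  rw [ddC_eval]
  have : ∀ i ∈ T \ T₁, dTerm B T 0 (invF B T f) T₁ T'' h2 i = 0 := by
    intro i hi
    rw [dTerm, dif_pos (ins_prop hp hi),
      invF_eval B T f (ins_prop hp hi) (h2.trans (Finset.subset_insert i T₁)),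
      dif_neg (not_T_subset (n := 0) hp h2), smul_zero]
  rw [Finset.sum_congr rfl this, Finset.sum_const_zero]
  rfl

lemma ker_val_zero (T : Finset ι) (x : Cn B T 0) (hx : ddC B T 0 x = 0)
    {T'' : Finset ι} (h2 : T'' ⊆ (Finset.univ : Finset ι)) (hT'' : ¬ T ⊆ T'') :
    x ⟨Finset.univ, univ_prop T⟩ ⟨T'', h2⟩ = 0 := by
  obtain ⟨i, hiT, hiT''⟩ := Finset.not_subset.mp hT''
  have hei := erase_prop (univ_prop T) hiT (Finset.mem_univ i)
  have hsub'' : T'' ⊆ Finset.univ.erase i :=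
    Finset.subset_erase.mpr ⟨Finset.subset_univ _, hiT''⟩
  have key : ddC B T 0 x ⟨Finset.univ.erase i, hei⟩ ⟨T'', hsub''⟩ = 0 := by rw [hx]; rfl
  rw [ddC_eval] at key
  have hsing : T \ Finset.univ.erase i = {i} := by
    ext a
    simp only [Finset.mem_sdiff, Finset.mem_erase, Finset.mem_singleton, Finset.mem_univ,
      and_true, not_and]
    constructor
    · rintro ⟨haT, himp⟩
      by_contra hne
      exact himp hne
    · rintro rfl
      exact ⟨hiT, fun hne => absurd rfl hne⟩
  rw [hsing, Finset.sum_singleton] at key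
  have hmm : i ∈ T \ Finset.univ.erase i := by
    rw [hsing]; exact Finset.mem_singleton_self i
  rw [dTerm, dif_pos (ins_prop hei hmm)] at key
  have hE : insert i (Finset.univ.erase i) = Finset.univ :=
    Finset.insert_erase (Finset.mem_univ i)
  rw [Cn_eval_congr (B := B) x hE (ins_prop hei hmm) (univ_prop T)
    (hsub''.trans (Finset.subset_insert _ _)) h2] at key
  calc x ⟨Finset.univ, univ_prop T⟩ ⟨T'', h2⟩
      = eCA T (Finset.univ.erase i) i • eCA T (Finset.univ.erase i) i •
          x ⟨Finset.univ, univ_prop T⟩ ⟨T'', h2⟩ := (eCA_smul_smul _ _ _ _).symm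
    _ = 0 := by rw [key, smul_zero]

def H0equiv (T : Finset ι) :
    ↥(ddC B T 0).ker ≃+ ((T' : {T' : Finset ι // T ⊆ T'}) → B T'.val) where
  toFun x T' := x.val ⟨Finset.univ, univ_prop T⟩ ⟨T'.val, Finset.subset_univ _⟩
  invFun f := ⟨invF B T f, AddMonoidHom.mem_ker.mpr (invF_mem_ker B T f)⟩
  left_inv x := by
    apply Subtype.ext
    funext T₁' T₂''
    obtain ⟨T₁, hq⟩ := T₁'
    obtain ⟨T'', h2⟩ := T₂''
    have hT₁ : T₁ = Finset.univ := Finset.eq_univ_of_card T₁ (by have := hq.2; omega)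
    have hx : ddC B T 0 x.val = 0 := AddMonoidHom.mem_ker.mp x.prop
    show invF B T (fun T' => x.val ⟨Finset.univ, univ_prop T⟩ ⟨T'.val, Finset.subset_univ _⟩)
        ⟨T₁, hq⟩ ⟨T'', h2⟩ = x.val ⟨T₁, hq⟩ ⟨T'', h2⟩
    rw [invF_eval]
    by_cases h : T ⊆ T''
    · rw [dif_pos h]
      exact Cn_eval_congr (B := B) x.val hT₁.symm (univ_prop T) hq _ h2
    · rw [dif_neg h]
      rw [Cn_eval_congr (B := B) x.val hT₁ hq (univ_prop T) h2 (Finset.subset_univ _)]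
      exact (ker_val_zero B T x.val hx _ h).symm
  right_inv f := by
    funext T'
    show invF B T f ⟨Finset.univ, univ_prop T⟩ ⟨T'.val, Finset.subset_univ _⟩ = f T'
    rw [invF_eval, dif_pos T'.prop]
  map_add' x y := rfl


/-- **combinatorial acyclicity lemma.** For a family `{B_{T''}}` of
abelian groups indexed by the subsets of a finite totally ordered set, and a fixed
`T`, the complex `C•_{S,T}` with `C^n = ⊕_{|T'| = s-n, T' ⊇ S∖T} A_{T'}`
(`A_{T'} = ⊕_{T'' ⊆ T'} B_{T''}`) and the signed-projection differential is a cochain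
complex with `H^n = 0` for `n ≠ 0` and `H^0 ≅ ⊕_{T' ⊇ T} B_{T'}`. -/
theorem combinatorial_acyclicity (T : Finset ι) :
    (∀ n : ℕ, (ddC B T (n + 1)).comp (ddC B T n) = 0) ∧
      (∀ (n : ℕ) (x : Cn B T (n + 1)), ddC B T (n + 1) x = 0 →
        ∃ y : Cn B T n, ddC B T n y = x) ∧
      Nonempty (↥(ddC B T 0).ker ≃+ ((T' : {T' : Finset ι // T ⊆ T'}) → B T'.val)) := by
  exact ⟨ddC_comp_ddC B T, fun n x hx => ⟨homY B T n x, ddC_exact B T n x hx⟩, ⟨H0equiv B T⟩⟩
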